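/- arXiv:math/0401032 — 2 statements merged into one kernel-verified Lean document; each statement's English description precedes it below -/
import Mathlib

section
/- Set u_{n+1} = 1/t and Δₙ(v) = ∏_{1 ≤ i < j ≤ n} (v_i − v_j). Then the following exact factorization holds in K: H(u₁, …, uₙ, 1/t; v₁, …, vₙ, 0) = (1 + a) · Δₙ(v)⁻¹ · det_{1 ≤ i, j ≤ n} [ v_i^{n−j} · ( 1 + a·t^j · ∏_{k=1}^{n+1} (u_k − v_i)/(t·u_k − v_i) ) ]. Consequently H(u₁, …, uₙ, 1/t; v₁, …, vₙ, 0), viewed as a polynomial in a over ℚ(q, t, u₁, …, uₙ, v₁, …, vₙ), vanishes at a = −1, and the limit lim_{a→−1} (1 + a)⁻¹ · H(u₁, …, uₙ, 1/t; v₁, …, vₙ, 0) equals Δₙ(v)⁻¹ · det_{1 ≤ i, j ≤ n} [ v_i^{n−j} · ( 1 − t^j · ∏_{k=1}^{n+1} (u_k − v_i)/(t·u_k − v_i) ) ]. -/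
open scoped BigOperators

noncomputable section

namespace Stmt3

/-- The indeterminates `q, t, u₁, …, uₙ, v₁, …, vₙ`. -/
inductive PVar (n : ℕ) : Type
  | q : PVar n
  | t : PVar n
  | u (i : Fin n) : PVar n
  | v (i : Fin n) : PVar n

/-- The field `K₀ = ℚ(q, t, u₁, …, uₙ, v₁, …, vₙ)`. -/
abbrev K0 (n : ℕ) : Type := FractionRing (MvPolynomial (PVar n) ℚ)

/-- The indeterminates, viewed as elements of `K₀`. -/
def X {n : ℕ} (w : PVar n) : K0 n :=
  algebraMap (MvPolynomial (PVar n) ℚ) (K0 n) (MvPolynomial.X w)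

/-- The tuple `(u₁, …, uₙ, 1/t)`. -/
def uext (n : ℕ) : Fin (n + 1) → K0 n :=
  Fin.snoc (fun i => X (PVar.u i)) (X PVar.t)⁻¹

/-- The tuple `(v₁, …, vₙ, 0)`. -/
def vext (n : ℕ) : Fin (n + 1) → K0 n :=
  Fin.snoc (fun i => X (PVar.v i)) 0

/-- `H(u₁, …, uₙ, 1/t; v₁, …, vₙ, 0)`, viewed as a polynomial in `a` over
`K₀ = ℚ(q, t, u₁, …, uₙ, v₁, …, vₙ)`; here the polynomial variable `Polynomial.X`
plays the role of `a`, and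
`H(U; V) = Δ(V)⁻¹ · det_{1 ≤ i,j ≤ n+1}
[ V_i^{n+1-j} · (1 + a·t^j · ∏_{k=1}^{n+1} (U_k - V_i)/(t·U_k - V_i)) ]`. -/
def Hpoly (n : ℕ) : Polynomial (K0 n) :=
  Polynomial.C (∏ i : Fin (n + 1), ∏ j ∈ Finset.Ioi i, (vext n i - vext n j))⁻¹ *
    Matrix.det (Matrix.of fun i j : Fin (n + 1) =>
      Polynomial.C (vext n i ^ (n - (j : ℕ))) *
        (1 + Polynomial.X *
          Polynomial.C (X PVar.t ^ ((j : ℕ) + 1) *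
            ∏ k : Fin (n + 1),
              (uext n k - vext n i) / (X PVar.t * uext n k - vext n i))))

/-- The cofactor `Δₙ(v)⁻¹ · det_{1 ≤ i,j ≤ n}
[ v_i^{n-j} · (1 + a·t^j · ∏_{k=1}^{n+1} (u_k - v_i)/(t·u_k - v_i)) ]` (with `u_{n+1} = 1/t`),
viewed as a polynomial in `a`. -/
def Dpoly (n : ℕ) : Polynomial (K0 n) :=
  Polynomial.C (∏ i : Fin n, ∏ j ∈ Finset.Ioi i, (X (PVar.v i) - X (PVar.v j)))⁻¹ *
    Matrix.det (Matrix.of fun i j : Fin n =>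
      Polynomial.C (X (PVar.v i) ^ (n - 1 - (j : ℕ))) *
        (1 + Polynomial.X *
          Polynomial.C (X PVar.t ^ ((j : ℕ) + 1) *
            ∏ k : Fin (n + 1),
              (uext n k - X (PVar.v i)) / (X PVar.t * uext n k - X (PVar.v i)))))

/-! ### Auxiliary material -/

lemma Ioi_castSucc' {n : ℕ} (i : Fin n) :
    Finset.Ioi (Fin.castSucc i) = insert (Fin.last n) ((Finset.Ioi i).map Fin.castSuccEmb) := by
  ext j
  rcases Fin.eq_castSucc_or_eq_last j with ⟨j', rfl⟩ | rfl
  · simp only [Finset.mem_Ioi, Fin.castSucc_lt_castSucc_iff, Finset.mem_insert,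
      Finset.mem_map, Fin.castSuccEmb, Fin.castAddEmb]
    constructor
    · intro h; exact Or.inr ⟨j', h, rfl⟩
    · rintro (h | ⟨a, ha, h⟩)
      · exact absurd h (Fin.castSucc_lt_last j').ne
      · have : a = j' := Fin.castSucc_injective n h
        omega
  · simp [Fin.castSucc_lt_last]

lemma prod_Ioi_split {M : Type*} [CommMonoid M] {n : ℕ} (f : Fin (n+1) → Fin (n+1) → M) :
    ∏ i : Fin (n+1), ∏ j ∈ Finset.Ioi i, f i j =
      (∏ i : Fin n, ∏ j ∈ Finset.Ioi i, f i.castSucc j.castSucc) *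
        ∏ i : Fin n, f i.castSucc (Fin.last n) := by
  rw [Fin.prod_univ_castSucc]
  have h1 : Finset.Ioi (Fin.last n) = ∅ := by
    ext j; simp [not_lt.mpr (Fin.le_last j)]
  rw [h1, Finset.prod_empty, mul_one, ← Finset.prod_mul_distrib]
  refine Finset.prod_congr rfl fun i _ => ?_
  have hnm : Fin.last n ∉ (Finset.Ioi i).map Fin.castSuccEmb := by
    simp only [Finset.mem_map]
    rintro ⟨a, _, h⟩
    exact (Fin.castSucc_lt_last a).ne h
  rw [Ioi_castSucc', Finset.prod_insert hnm, Finset.prod_map, mul_comm]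
  rfl

/-- The big `(n+1) × (n+1)` matrix occurring in `Hpoly`. -/
def Mmat (n : ℕ) : Matrix (Fin (n + 1)) (Fin (n + 1)) (Polynomial (K0 n)) :=
  Matrix.of fun i j : Fin (n + 1) =>
    Polynomial.C (vext n i ^ (n - (j : ℕ))) *
      (1 + Polynomial.X *
        Polynomial.C (X PVar.t ^ ((j : ℕ) + 1) *
          ∏ k : Fin (n + 1),
            (uext n k - vext n i) / (X PVar.t * uext n k - vext n i)))

/-- The `n × n` matrix occurring in `Dpoly`. -/
def Dmat (n : ℕ) : Matrix (Fin n) (Fin n) (Polynomial (K0 n)) :=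
  Matrix.of fun i j : Fin n =>
    Polynomial.C (X (PVar.v i) ^ (n - 1 - (j : ℕ))) *
      (1 + Polynomial.X *
        Polynomial.C (X PVar.t ^ ((j : ℕ) + 1) *
          ∏ k : Fin (n + 1),
            (uext n k - X (PVar.v i)) / (X PVar.t * uext n k - X (PVar.v i))))

lemma Hpoly_eq (n : ℕ) : Hpoly n =
    Polynomial.C (∏ i : Fin (n + 1), ∏ j ∈ Finset.Ioi i, (vext n i - vext n j))⁻¹ *
      (Mmat n).det := rfl

lemma Dpoly_eq (n : ℕ) : Dpoly n =
    Polynomial.C (∏ i : Fin n, ∏ j ∈ Finset.Ioi i, (X (PVar.v i) - X (PVar.v j)))⁻¹ *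
      (Dmat n).det := rfl

theorem statement3 (n : ℕ) (hn : 1 ≤ n) :
    Hpoly n = (1 + Polynomial.X) * Dpoly n ∧
      (Hpoly n).eval (-1) = 0 ∧
      ((Hpoly n) /ₘ (Polynomial.X + 1)).eval (-1) =
        (∏ i : Fin n, ∏ j ∈ Finset.Ioi i, (X (PVar.v i) - X (PVar.v j)))⁻¹ *
          Matrix.det (Matrix.of fun i j : Fin n =>
            X (PVar.v i) ^ (n - 1 - (j : ℕ)) *
              (1 - X PVar.t ^ ((j : ℕ) + 1) *
                ∏ k : Fin (n + 1),
                  (uext n k - X (PVar.v i)) /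
                    (X PVar.t * uext n k - X (PVar.v i)))) := by
  classical
  have hXne : ∀ w : PVar n, X w ≠ 0 := by
    intro w
    exact (map_ne_zero_iff _
      (IsFractionRing.injective (MvPolynomial (PVar n) ℚ) (K0 n))).mpr
      (MvPolynomial.X_ne_zero w)
  have ht : (X (n := n) PVar.t) ≠ 0 := hXne _
  have huneq : ∀ k : Fin (n + 1), uext n k ≠ 0 := by
    intro k
    rcases Fin.eq_castSucc_or_eq_last k with ⟨k', rfl⟩ | rfl
    · simpa [uext] using hXne (PVar.u k')
    · simpa [uext] using inv_ne_zero ht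
  set Δn : K0 n := ∏ i : Fin n, ∏ j ∈ Finset.Ioi i, (X (PVar.v i) - X (PVar.v j)) with hΔn
  set P : K0 n := ∏ i : Fin n, X (PVar.v i) with hP
  have hPne : P ≠ 0 := Finset.prod_ne_zero_iff.mpr fun i _ => hXne _
  have hvlast : vext n (Fin.last n) = 0 := by simp [vext]
  -- last row vanishes except corner
  have hrow0 : ∀ j : Fin n, Mmat n (Fin.last n) j.castSucc = 0 := by
    intro j
    have hj : n - ((j.castSucc : Fin (n+1)) : ℕ) ≠ 0 := by
      have := j.isLt; simp only [Fin.coe_castSucc]; omega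
    simp only [Mmat, Matrix.of_apply, hvlast]
    rw [zero_pow hj, map_zero, zero_mul]
  -- corner entry is 1 + X
  have hcorner : Mmat n (Fin.last n) (Fin.last n) = 1 + Polynomial.X := by
    have hfac : ∀ k : Fin (n+1),
        (uext n k - (0 : K0 n)) / (X PVar.t * uext n k - 0) = (X (n := n) PVar.t)⁻¹ := by
      intro k
      rw [sub_zero, sub_zero, mul_comm, div_mul_eq_div_div, div_self (huneq k), one_div]
    simp only [Mmat, Matrix.of_apply, hvlast, Fin.val_last, Nat.sub_self, pow_zero,
      map_one, one_mul]
    rw [Finset.prod_congr rfl (fun k _ => hfac k), Finset.prod_const, Finset.card_univ,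
      Fintype.card_fin, ← mul_pow, mul_inv_cancel₀ ht, one_pow, map_one, mul_one]
  -- the minor equals diag(v) ⬝ Dmat
  have hsub : ∀ i j : Fin n,
      Mmat n i.castSucc j.castSucc = Polynomial.C (X (PVar.v i)) * Dmat n i j := by
    intro i j
    have hv : vext n i.castSucc = X (PVar.v i) := by simp [vext]
    have hpow : n - (j : ℕ) = (n - 1 - (j : ℕ)) + 1 := by
      have := j.isLt; omega
    simp only [Mmat, Dmat, Matrix.of_apply, hv, Fin.coe_castSucc]
    rw [hpow, pow_succ, map_mul]
    ring
  -- determinant factorization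
  have hdetM : (Mmat n).det = (1 + Polynomial.X) * (Polynomial.C P * (Dmat n).det) := by
    rw [Matrix.det_succ_row (Mmat n) (Fin.last n), Fin.sum_univ_castSucc]
    simp only [hrow0, mul_zero, zero_mul, Finset.sum_const_zero, zero_add, hcorner]
    have hsign : ((-1 : Polynomial (K0 n)) ^ (((Fin.last n) : ℕ) + ((Fin.last n) : ℕ))) = 1 := by
      rw [Fin.val_last, ← two_mul, pow_mul]; norm_num
    rw [hsign, one_mul]
    have hms : (Mmat n).submatrix (Fin.last n).succAbove (Fin.last n).succAbove =
        Matrix.of (fun i j : Fin n => Polynomial.C (X (PVar.v i)) * Dmat n i j) := by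
      refine Matrix.ext fun i j => ?_
      simp only [Matrix.submatrix_apply, Fin.succAbove_last, Matrix.of_apply]
      exact hsub i j
    rw [hms, Matrix.det_mul_column, ← map_prod, ← hP]
  -- splitting the Vandermonde factor
  have hΔ : (∏ i : Fin (n+1), ∏ j ∈ Finset.Ioi i, (vext n i - vext n j)) = Δn * P := by
    rw [prod_Ioi_split (fun i j => vext n i - vext n j)]
    congr 1
    · refine Finset.prod_congr rfl fun i _ => Finset.prod_congr rfl fun j _ => ?_
      simp [vext]
    · refine Finset.prod_congr rfl fun i _ => ?_
      simp [vext]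
  -- part 1
  have h1 : Hpoly n = (1 + Polynomial.X) * Dpoly n := by
    rw [Hpoly_eq, Dpoly_eq, hdetM, hΔ, mul_inv, map_mul]
    have hc : Polynomial.C P⁻¹ * Polynomial.C P = (1 : Polynomial (K0 n)) := by
      rw [← map_mul, inv_mul_cancel₀ hPne, map_one]
    linear_combination (1 + Polynomial.X) * Polynomial.C Δn⁻¹ * (Dmat n).det * hc
  refine ⟨h1, ?_, ?_⟩
  · rw [h1]; simp
  · have hdiv : Hpoly n /ₘ (Polynomial.X + 1) = Dpoly n := by
      have h1' : Hpoly n = (Polynomial.X + Polynomial.C 1) * Dpoly n := by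
        rw [h1, map_one, add_comm]
      rw [show (Polynomial.X + 1 : Polynomial (K0 n)) = Polynomial.X + Polynomial.C 1 by
        rw [map_one], h1', Polynomial.mul_divByMonic_cancel_left _ (Polynomial.monic_X_add_C 1)]
    rw [hdiv, Dpoly_eq, Polynomial.eval_mul, Polynomial.eval_C]
    congr 1
    have hmap : (Dmat n).map (Polynomial.eval (-1 : K0 n)) =
        Matrix.of (fun i j : Fin n =>
          X (PVar.v i) ^ (n - 1 - (j : ℕ)) *
            (1 - X PVar.t ^ ((j : ℕ) + 1) *
              ∏ k : Fin (n + 1),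
                (uext n k - X (PVar.v i)) / (X PVar.t * uext n k - X (PVar.v i)))) := by
      refine Matrix.ext fun i j => ?_
      simp only [Matrix.map_apply, Dmat, Matrix.of_apply, Polynomial.eval_mul,
        Polynomial.eval_add, Polynomial.eval_one, Polynomial.eval_C, Polynomial.eval_X]
      ring
    calc ((Dmat n).det).eval (-1)
        = ((Dmat n).map (Polynomial.eval (-1 : K0 n))).det := by
          rw [← Polynomial.coe_evalRingHom, RingHom.map_det, RingHom.mapMatrix_apply]
      _ = _ := by rw [hmap]
end Stmt3
end
end

section
/- Let θ = (θ₁, …, θₙ) ∈ ℕⁿ, set v_i = q^{θ_i}·u_i for 1 ≤ i ≤ n, u_{n+1} = 1/t, and Δ(v) = ∏_{1 ≤ i < j ≤ n} (v_i − v_j). Then the following two expressions are equal in K (both define the coefficient C^{(q,t)}_{θ₁,…,θₙ}(u₁,…,uₙ)): ∏_{k=1}^n [ t^{θ_k} · (q/t; q)_{θ_k}/(q; q)_{θ_k} · (q·u_k; q)_{θ_k}/(q·t·u_k; q)_{θ_k} ] · ∏_{1 ≤ i < j ≤ n} [ (q·u_i/(t·u_j); q)_{θ_i}/(q·u_i/u_j;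 q)_{θ_i} · (t·u_i/v_j; q)_{θ_i}/(u_i/v_j; q)_{θ_i} ] · Δ(v)⁻¹ · det_{1 ≤ i, j ≤ n} [ v_i^{n−j} · ( 1 − t^{j−1} · ((1 − t·v_i)/(1 − v_i)) · ∏_{k=1}^{n} (u_k − v_i)/(t·u_k − v_i) ) ] = ∏_{1 ≤ i < j ≤ n+1} (q·u_i/(t·u_j); q)_{θ_i}/(q·u_i/u_j; q)_{θ_i} · ∏_{1 ≤ i ≤ j ≤ n} (t·u_i/v_j; q)_{θ_i}/(u_i/v_j; q)_{θ_i} · Δ(v)⁻¹ · det_{1 ≤ i, j ≤ n} [ v_i^{n−j} · ( 1 − t^j · ∏_{k=1}^{n+1} (u_k − v_i)/(t·u_k − v_i) ) ]. -/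
open scoped BigOperators

noncomputable section

namespace Stmt5

/-- The indeterminates `q, t, u₁, …, uₙ`. -/
inductive PVar (n : ℕ) : Type
  | q : PVar n
  | t : PVar n
  | u (i : Fin n) : PVar n

/-- The field `K = ℚ(q, t, u₁, …, uₙ)`. -/
abbrev K (n : ℕ) : Type := FractionRing (MvPolynomial (PVar n) ℚ)

/-- The indeterminates, viewed as elements of `K`. -/
def X {n : ℕ} (w : PVar n) : K n :=
  algebraMap (MvPolynomial (PVar n) ℚ) (K n) (MvPolynomial.X w)

/-- The q-Pochhammer symbol `(x; q)_m = ∏_{l=0}^{m-1} (1 - x·q^l)`. -/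
def qpoch {F : Type*} [Field F] (q x : F) (m : ℕ) : F :=
  ∏ l ∈ Finset.range m, (1 - x * q ^ l)

/-- `v_i = q^{θ_i}·u_i`. -/
def v {n : ℕ} (θ : Fin n → ℕ) (i : Fin n) : K n :=
  X PVar.q ^ θ i * X (PVar.u i)

/-- The tuple `(u₁, …, uₙ, 1/t)`. -/
def uext (n : ℕ) : Fin (n + 1) → K n :=
  Fin.snoc (fun i => X (PVar.u i)) (X PVar.t)⁻¹

/-! ### Auxiliary lemmas -/

lemma algMap_ne_zero {n : ℕ} (p : MvPolynomial (PVar n) ℚ) (f : PVar n → ℚ)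
    (h : MvPolynomial.eval f p ≠ 0) :
    algebraMap (MvPolynomial (PVar n) ℚ) (K n) p ≠ 0 := by
  intro h0
  apply h
  have hp : p = 0 := by
    apply IsFractionRing.injective (MvPolynomial (PVar n) ℚ) (K n)
    simpa using h0
  simp [hp]

lemma X_ne_zero {n : ℕ} (w : PVar n) : X w ≠ 0 :=
  algMap_ne_zero _ (fun _ => 1) (by simp)

lemma one_sub_q_mul_pow_ne_zero {n : ℕ} (l : ℕ) :
    (1 : K n) - X PVar.q * X PVar.q ^ l ≠ 0 := by
  have h : (1 : K n) - X PVar.q * X PVar.q ^ l =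
      algebraMap (MvPolynomial (PVar n) ℚ) (K n)
        (1 - MvPolynomial.X PVar.q * MvPolynomial.X PVar.q ^ l) := by
    simp [X, map_sub, map_mul, map_pow, map_one]
  rw [h]
  exact algMap_ne_zero _ (fun _ => 0) (by simp)

lemma qpoch_q_ne_zero {n : ℕ} (m : ℕ) :
    qpoch (X PVar.q) (X PVar.q) m ≠ (0 : K n) := by
  unfold qpoch
  exact Finset.prod_ne_zero_iff.mpr fun l _ => one_sub_q_mul_pow_ne_zero l

/-- Reflection identity for the q-Pochhammer symbol. -/
lemma qpoch_reflect {F : Type*} [Field F] (q x : F) (hq : q ≠ 0) (hx : x ≠ 0) (m : ℕ) :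
    qpoch q (x * (q ^ m)⁻¹) m =
      (-x) ^ m * (∏ l ∈ Finset.range m, (q ^ (l + 1))⁻¹) * qpoch q (q / x) m := by
  unfold qpoch
  have key : ∀ l ∈ Finset.range m,
      (1 : F) - x * (q ^ m)⁻¹ * q ^ (m - 1 - l) =
        (-x) * (q ^ (l + 1))⁻¹ * (1 - q / x * q ^ l) := by
    intro l hl
    rw [Finset.mem_range] at hl
    have h1 : (q : F) ^ (m - 1 - l) * q ^ (l + 1) = q ^ m := by
      rw [← pow_add]; congr 1; omega
    have h2 : (q : F) ^ (l + 1) ≠ 0 := pow_ne_zero _ hq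
    have h3 : (q : F) ^ m ≠ 0 := pow_ne_zero _ hq
    have h4 : (q : F) ^ (m - 1 - l) ≠ 0 := pow_ne_zero _ hq
    field_simp
    linear_combination (-x) * h1
  calc (∏ l ∈ Finset.range m, (1 - x * (q ^ m)⁻¹ * q ^ l))
      = ∏ l ∈ Finset.range m, (1 - x * (q ^ m)⁻¹ * q ^ (m - 1 - l)) :=
        (Finset.prod_range_reflect (fun l => 1 - x * (q ^ m)⁻¹ * q ^ l) m).symm
    _ = ∏ l ∈ Finset.range m, ((-x) * (q ^ (l + 1))⁻¹ * (1 - q / x * q ^ l)) :=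
        Finset.prod_congr rfl key
    _ = (-x) ^ m * (∏ l ∈ Finset.range m, (q ^ (l + 1))⁻¹) *
          ∏ l ∈ Finset.range m, (1 - q / x * q ^ l) := by
        rw [Finset.prod_mul_distrib, Finset.prod_mul_distrib, Finset.prod_const,
          Finset.card_range]

lemma qpoch_ratio {n : ℕ} (m : ℕ) :
    qpoch (X PVar.q) (X PVar.t * ((X PVar.q : K n) ^ m)⁻¹) m /
      qpoch (X PVar.q) ((X PVar.q ^ m)⁻¹) m =
    X PVar.t ^ m *
      (qpoch (X PVar.q) (X PVar.q / X PVar.t) m / qpoch (X PVar.q) (X PVar.q) m) := by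
  have hq : (X PVar.q : K n) ≠ 0 := X_ne_zero _
  have ht : (X PVar.t : K n) ≠ 0 := X_ne_zero _
  have h1 := qpoch_reflect (X PVar.q) (X PVar.t) hq ht m
  have h2 := qpoch_reflect (X PVar.q : K n) 1 hq one_ne_zero m
  rw [one_mul, div_one] at h2
  rw [h1, h2]
  have hP : (∏ l ∈ Finset.range m, ((X PVar.q : K n) ^ (l + 1))⁻¹) ≠ 0 :=
    Finset.prod_ne_zero_iff.mpr fun l _ => inv_ne_zero (pow_ne_zero _ hq)
  have hB : qpoch (X PVar.q) (X PVar.q) m ≠ (0 : K n) := qpoch_q_ne_zero m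
  have hneg : ((-1 : K n)) ^ m ≠ 0 := pow_ne_zero _ (by norm_num)
  rw [neg_eq_neg_one_mul (X PVar.t : K n), mul_pow]
  have hP' : (∏ x ∈ Finset.range m, (X PVar.q : K n) ^ (x + 1)) ≠ 0 :=
    Finset.prod_ne_zero_iff.mpr fun l _ => pow_ne_zero _ hq
  field_simp
  ring
  have hP'' : (∏ x ∈ Finset.range m, (X PVar.q : K n)⁻¹ * (X PVar.q)⁻¹ ^ x) ≠ 0 :=
    Finset.prod_ne_zero_iff.mpr fun l _ => mul_ne_zero (inv_ne_zero hq) (pow_ne_zero _ (inv_ne_zero hq))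
  rw [mul_right_comm, mul_inv_cancel₀ hP'', one_mul]

lemma diag_term {n : ℕ} (θ : Fin n → ℕ) (i : Fin n) :
    qpoch (X PVar.q) (X PVar.t * X (PVar.u i) / v θ i) (θ i) /
      qpoch (X PVar.q) (X (PVar.u i) / v θ i) (θ i) =
    X PVar.t ^ θ i *
      (qpoch (X PVar.q) (X PVar.q / X PVar.t) (θ i) / qpoch (X PVar.q) (X PVar.q) (θ i)) := by
  have hq : (X PVar.q : K n) ≠ 0 := X_ne_zero _
  have hu : (X (PVar.u i) : K n) ≠ 0 := X_ne_zero _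
  have h1 : X PVar.t * X (PVar.u i) / v θ i = X PVar.t * ((X PVar.q : K n) ^ θ i)⁻¹ := by
    unfold v; field_simp
  have h2 : X (PVar.u i) / v θ i = ((X PVar.q : K n) ^ θ i)⁻¹ := by
    unfold v; field_simp
  rw [h1, h2, qpoch_ratio]

lemma prod_Ioi_castSucc {M : Type*} [CommMonoid M] {n : ℕ} (i : Fin n) (f : Fin (n + 1) → M) :
    ∏ j ∈ Finset.Ioi i.castSucc, f j =
      f (Fin.last n) * ∏ j ∈ Finset.Ioi i, f j.castSucc := by
  have hset : Finset.Ioi i.castSucc =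
      insert (Fin.last n) ((Finset.Ioi i).map Fin.castSuccEmb) := by
    ext j
    simp only [Finset.mem_Ioi, Finset.mem_insert, Finset.mem_map,
      Fin.castSuccEmb_apply, Fin.lt_def, Fin.coe_castSucc, Fin.val_last]
    constructor
    · intro h
      rcases eq_or_lt_of_le (Nat.lt_succ_iff.mp j.isLt) with h' | h'
      · left; exact Fin.ext h'
      · right
        exact ⟨⟨j.val, h'⟩, h, Fin.ext rfl⟩
    · rintro (rfl | ⟨j', hj', rfl⟩)
      · simpa using i.isLt
      · exact hj'
  rw [hset, Finset.prod_insert, Finset.prod_map]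
  · rfl
  · simp only [Finset.mem_map, Fin.castSuccEmb_apply]
    rintro ⟨j', _, hj'⟩
    exact absurd (congrArg Fin.val hj') (by simp [Fin.val_last]; omega)

lemma last_term {n : ℕ} (θ : Fin n → ℕ) (i : Fin n) :
    qpoch (X PVar.q) (X PVar.q * uext n i.castSucc / (X PVar.t * uext n (Fin.last n))) (θ i) /
      qpoch (X PVar.q) (X PVar.q * uext n i.castSucc / uext n (Fin.last n)) (θ i) =
    qpoch (X PVar.q) (X PVar.q * X (PVar.u i)) (θ i) /
      qpoch (X PVar.q) (X PVar.q * X PVar.t * X (PVar.u i)) (θ i) := by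
  have ht : (X PVar.t : K n) ≠ 0 := X_ne_zero _
  have h1 : uext n i.castSucc = X (PVar.u i) := by simp [uext]
  have h2 : uext n (Fin.last n) = (X PVar.t)⁻¹ := by simp [uext]
  rw [h1, h2, mul_inv_cancel₀ ht, div_one]
  have h3 : X PVar.q * X (PVar.u i) / (X PVar.t : K n)⁻¹ =
      X PVar.q * X PVar.t * X (PVar.u i) := by
    field_simp
  rw [h3]

lemma entry_eq {n : ℕ} (θ : Fin n → ℕ) (i j : Fin n) :
    v θ i ^ (n - 1 - (j : ℕ)) *
        (1 - X PVar.t ^ ((j : ℕ) + 1) *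
          ∏ k : Fin (n + 1), (uext n k - v θ i) / (X PVar.t * uext n k - v θ i)) =
    v θ i ^ (n - 1 - (j : ℕ)) *
        (1 - X PVar.t ^ (j : ℕ) * ((1 - X PVar.t * v θ i) / (1 - v θ i)) *
          ∏ k : Fin n, (X (PVar.u k) - v θ i) / (X PVar.t * X (PVar.u k) - v θ i)) := by
  have ht : (X PVar.t : K n) ≠ 0 := X_ne_zero _
  congr 1
  congr 1
  rw [Fin.prod_univ_castSucc]
  simp only [uext, Fin.snoc_castSucc, Fin.snoc_last]
  rw [mul_inv_cancel₀ ht]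
  have key : X PVar.t ^ ((j : ℕ) + 1) * ((X PVar.t)⁻¹ - v θ i) =
      X PVar.t ^ (j : ℕ) * (1 - X PVar.t * v θ i) := by
    rw [pow_succ]
    field_simp
  rw [div_eq_mul_inv, div_eq_mul_inv]
  linear_combination ((∏ k : Fin n, (X (PVar.u k) - v θ i) /
      (X PVar.t * X (PVar.u k) - v θ i)) * (1 - v θ i)⁻¹) * key

theorem statement5 (n : ℕ) (hn : 1 ≤ n) (θ : Fin n → ℕ) :
    (∏ k : Fin n,
        X PVar.t ^ θ k *
          (qpoch (X PVar.q) (X PVar.q / X PVar.t) (θ k) / qpoch (X PVar.q) (X PVar.q) (θ k)) *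
          (qpoch (X PVar.q) (X PVar.q * X (PVar.u k)) (θ k) /
            qpoch (X PVar.q) (X PVar.q * X PVar.t * X (PVar.u k)) (θ k))) *
      (∏ i : Fin n, ∏ j ∈ Finset.Ioi i,
        (qpoch (X PVar.q) (X PVar.q * X (PVar.u i) / (X PVar.t * X (PVar.u j))) (θ i) /
            qpoch (X PVar.q) (X PVar.q * X (PVar.u i) / X (PVar.u j)) (θ i)) *
          (qpoch (X PVar.q) (X PVar.t * X (PVar.u i) / v θ j) (θ i) /
            qpoch (X PVar.q) (X (PVar.u i) / v θ j) (θ i))) *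
      ((∏ i : Fin n, ∏ j ∈ Finset.Ioi i, (v θ i - v θ j))⁻¹ *
        Matrix.det (Matrix.of fun i j : Fin n =>
          v θ i ^ (n - 1 - (j : ℕ)) *
            (1 - X PVar.t ^ (j : ℕ) * ((1 - X PVar.t * v θ i) / (1 - v θ i)) *
              ∏ k : Fin n,
                (X (PVar.u k) - v θ i) / (X PVar.t * X (PVar.u k) - v θ i)))) =
    (∏ i : Fin n, ∏ j ∈ Finset.Ioi i.castSucc,
        qpoch (X PVar.q) (X PVar.q * uext n i.castSucc / (X PVar.t * uext n j)) (θ i) /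
          qpoch (X PVar.q) (X PVar.q * uext n i.castSucc / uext n j) (θ i)) *
      (∏ i : Fin n, ∏ j ∈ Finset.Ici i,
        qpoch (X PVar.q) (X PVar.t * X (PVar.u i) / v θ j) (θ i) /
          qpoch (X PVar.q) (X (PVar.u i) / v θ j) (θ i)) *
      ((∏ i : Fin n, ∏ j ∈ Finset.Ioi i, (v θ i - v θ j))⁻¹ *
        Matrix.det (Matrix.of fun i j : Fin n =>
          v θ i ^ (n - 1 - (j : ℕ)) *
            (1 - X PVar.t ^ ((j : ℕ) + 1) *
              ∏ k : Fin (n + 1),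
                (uext n k - v θ i) / (X PVar.t * uext n k - v θ i)))) := by
  have hMdet :
      Matrix.det (Matrix.of fun i j : Fin n =>
          v θ i ^ (n - 1 - (j : ℕ)) *
            (1 - X PVar.t ^ ((j : ℕ) + 1) *
              ∏ k : Fin (n + 1),
                (uext n k - v θ i) / (X PVar.t * uext n k - v θ i))) =
      Matrix.det (Matrix.of fun i j : Fin n =>
          v θ i ^ (n - 1 - (j : ℕ)) *
            (1 - X PVar.t ^ (j : ℕ) * ((1 - X PVar.t * v θ i) / (1 - v θ i)) *
              ∏ k : Fin n,
                (X (PVar.u k) - v θ i) / (X PVar.t * X (PVar.u k) - v θ i))) := by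
    congr 1
    ext i j
    exact entry_eq θ i j
  have h4 : (∏ i : Fin n, ∏ j ∈ Finset.Ioi i.castSucc,
        qpoch (X PVar.q) (X PVar.q * uext n i.castSucc / (X PVar.t * uext n j)) (θ i) /
          qpoch (X PVar.q) (X PVar.q * uext n i.castSucc / uext n j) (θ i)) =
      ∏ i : Fin n,
        ((qpoch (X PVar.q) (X PVar.q * X (PVar.u i)) (θ i) /
            qpoch (X PVar.q) (X PVar.q * X PVar.t * X (PVar.u i)) (θ i)) *
          ∏ j ∈ Finset.Ioi i,
            (qpoch (X PVar.q) (X PVar.q * X (PVar.u i) / (X PVar.t * X (PVar.u j))) (θ i) /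
              qpoch (X PVar.q) (X PVar.q * X (PVar.u i) / X (PVar.u j)) (θ i))) := by
    refine Finset.prod_congr rfl fun i _ => ?_
    rw [prod_Ioi_castSucc, last_term]
    congr 1
    refine Finset.prod_congr rfl fun j _ => ?_
    simp only [uext, Fin.snoc_castSucc]
  have h5 : (∏ i : Fin n, ∏ j ∈ Finset.Ici i,
        qpoch (X PVar.q) (X PVar.t * X (PVar.u i) / v θ j) (θ i) /
          qpoch (X PVar.q) (X (PVar.u i) / v θ j) (θ i)) =
      ∏ i : Fin n,
        ((X PVar.t ^ θ i *
            (qpoch (X PVar.q) (X PVar.q / X PVar.t) (θ i) /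
              qpoch (X PVar.q) (X PVar.q) (θ i))) *
          ∏ j ∈ Finset.Ioi i,
            (qpoch (X PVar.q) (X PVar.t * X (PVar.u i) / v θ j) (θ i) /
              qpoch (X PVar.q) (X (PVar.u i) / v θ j) (θ i))) := by
    refine Finset.prod_congr rfl fun i _ => ?_
    rw [Finset.Ici_eq_cons_Ioi, Finset.prod_cons, diag_term]
  rw [hMdet, h4, h5]
  simp only [Finset.prod_mul_distrib]
  ring

end Stmt5
end
end
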